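/- (Lower-endpoint gradient inequality underlying Theorem 2.1) Let 𝒳 ⊆ ℝⁿ be a nonempty open convex set and let f̲, f̄ : 𝒳 → ℝ be convex functions with f̲ ≤ f̄ on 𝒳, both differentiable at a point x ∈ 𝒳. Then for every y ∈ 𝒳: Σᵢ₌₁ⁿ min((yᵢ − xᵢ)·∂ᵢf̲(x), (yᵢ − xᵢ)·∂ᵢf̄(x)) ≤ min(f̲(y) − f̲(x), f̄(y) − f̄(x)). (This is the lower endpoint of the dominance relation (y − x)ᵀ ⊙ ∇F(x) ⪯ F(y) ⊖_gH F(x) for the convex IVF F = [f̲, f̄].) -/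

import Mathlib

open Set

lemma grad_ineq_of_convexOn {n : ℕ} {X : Set (Fin n → ℝ)} (hconvX : Convex ℝ X)
    {f : (Fin n → ℝ) → ℝ} (hf : ConvexOn ℝ X f)
    {x y : Fin n → ℝ} (hx : x ∈ X) (hy : y ∈ X)
    {D : (Fin n → ℝ) →L[ℝ] ℝ} (hd : HasFDerivAt f D x) :
    D (y - x) ≤ f y - f x := by
  set g : ℝ → ℝ := fun t => f (x + t • (y - x)) with hg
  have hcurve : ∀ t : ℝ, HasDerivAt (fun t : ℝ => x + t • (y - x)) (y - x) t := by
    intro t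
    simpa using ((hasDerivAt_id t).smul_const (y - x)).const_add x
  have hmem : ∀ t ∈ Icc (0:ℝ) 1, x + t • (y - x) ∈ X := by
    intro t ht
    have := hconvX hx hy (by linarith [ht.1, ht.2] : (0:ℝ) ≤ 1 - t) ht.1 (by ring)
    convert this using 1
    simp [smul_sub, sub_smul]
    module
  have hgconv : ConvexOn ℝ (Icc (0:ℝ) 1) g := by
    refine ⟨convex_Icc 0 1, ?_⟩
    intro a ha b hb p q hp hq hpq
    have ha' := hmem a ha
    have hb' := hmem b hb
    have key := hf.2 ha' hb' hp hq hpq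
    have : x + (p * a + q * b) • (y - x) = p • (x + a • (y - x)) + q • (x + b • (y - x)) := by
      match_scalars <;> linarith
    simpa [g, this] using key
  have hg0 : HasDerivAt g (D (y - x)) 0 := by
    have h0 : x + (0:ℝ) • (y - x) = x := by simp
    have hd' : HasFDerivAt f D (x + (0:ℝ) • (y - x)) := by rw [h0]; exact hd
    have := hd'.comp_hasDerivAt 0 (hcurve 0)
    exact this
  have hslope := hgconv.le_slope_of_hasDerivAt (by simp : (0:ℝ) ∈ Icc (0:ℝ) 1)
    (by simp : (1:ℝ) ∈ Icc (0:ℝ) 1) one_pos hg0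
  have : slope g 0 1 = f y - f x := by
    simp [slope_def_field, g]
  linarith [hslope, this ▸ hslope]

theorem gH_gradient_lower_endpoint_ineq {n : ℕ} {X : Set (Fin n → ℝ)}
    (hne : X.Nonempty) (hopen : IsOpen X) (hconv : Convex ℝ X)
    (flo fup : (Fin n → ℝ) → ℝ)
    (hflo : ConvexOn ℝ X flo) (hfup : ConvexOn ℝ X fup)
    (hle : ∀ z ∈ X, flo z ≤ fup z)
    {x : Fin n → ℝ} (hx : x ∈ X)
    {Dlo Dup : (Fin n → ℝ) →L[ℝ] ℝ}
    (hdlo : HasFDerivAt flo Dlo x) (hdup : HasFDerivAt fup Dup x) :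
    ∀ y ∈ X,
      ∑ i : Fin n, min ((y i - x i) * Dlo (Pi.single i 1))
          ((y i - x i) * Dup (Pi.single i 1)) ≤
        min (flo y - flo x) (fup y - fup x) := by
  intro y hy
  have hsum : ∀ (D : (Fin n → ℝ) →L[ℝ] ℝ),
      ∑ i : Fin n, (y i - x i) * D (Pi.single i 1) = D (y - x) := by
    intro D
    have hyx : (y - x) = ∑ i : Fin n, (y i - x i) • (Pi.single i (1:ℝ) : Fin n → ℝ) := by
      funext j
      simp [Pi.single_apply, Finset.sum_ite_eq']
    rw [hyx, map_sum]
    simp [smul_eq_mul]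
  refine le_min ?_ ?_
  · calc ∑ i : Fin n, min ((y i - x i) * Dlo (Pi.single i 1))
          ((y i - x i) * Dup (Pi.single i 1))
        ≤ ∑ i : Fin n, (y i - x i) * Dlo (Pi.single i 1) :=
          Finset.sum_le_sum fun i _ => min_le_left _ _
      _ = Dlo (y - x) := hsum Dlo
      _ ≤ flo y - flo x := grad_ineq_of_convexOn hconv hflo hx hy hdlo
  · calc ∑ i : Fin n, min ((y i - x i) * Dlo (Pi.single i 1))
          ((y i - x i) * Dup (Pi.single i 1))
        ≤ ∑ i : Fin n, (y i - x i) * Dup (Pi.single i 1) :=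
          Finset.sum_le_sum fun i _ => min_le_right _ _
      _ = Dup (y - x) := hsum Dup
      _ ≤ fup y - fup x := grad_ineq_of_convexOn hconv hfup hx hy hdup
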